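/- The transformation s₀ is an involution: for every point (ε, q, p, x) with p_j ≠ 0 and q_j p_j ≠ ε_{j+3} for all j, Q₁ ≠ 0, Q₁ + ε₃ ≠ 0, and x_i ≠ 0 for all i, applying s₀ twice returns the original point. -/

import Mathlib

open Finset

noncomputable section

/-- A point `(ε, q, p, x) ∈ ℂ^{n+3} × ℂⁿ × ℂⁿ × ℂⁿ`, where `n = m + 2` (so `n ≥ 2`).
Indices are 0-based: `e ⟨j-1,_⟩` is the paper's `ε_j`, etc. -/
structure GPt (m : ℕ) where
  e : Fin (m + 5) → ℂ
  q : Fin (m + 2) → ℂ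
  p : Fin (m + 2) → ℂ
  x : Fin (m + 2) → ℂ

namespace GPt

variable {m : ℕ}

/-- `Q₁ = Σ_{l=1}^n q_l p_l + (1 − Σ_{l=1}^{n+3} ε_l)/2`. -/
def Q1 (P : GPt m) : ℂ := (∑ l, P.q l * P.p l) + (1 - ∑ j, P.e j) / 2

/-- `Q₂ = Σ_{j=1}^n q_j − 1`. -/
def Q2 (P : GPt m) : ℂ := (∑ j, P.q j) - 1

/-- The index of `ε_{j+3}` (paper numbering) for `j` indexing `q, p, x`. -/
def eIdx (j : Fin (m + 2)) : Fin (m + 5) := ⟨j.val + 3, by omega⟩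

/-- The transformation `s₀`. -/
def s0 (P : GPt m) : GPt m where
  e := fun j => if j = 0 then 1 - P.e 1 else if j = 1 then 1 - P.e 0 else P.e j
  q := fun j => P.p j * (P.q j * P.p j - P.e (eIdx j)) / (P.Q1 * (P.Q1 + P.e 2))
  p := fun j => -(P.Q1 * (P.Q1 + P.e 2)) / P.p j
  x := fun i => 1 / P.x i

/-- The transformation `s₁`. -/
def s1 (P : GPt m) : GPt m where
  e := fun j => P.e (Equiv.swap 0 1 j)
  q := fun j => P.q j / P.x j
  p := fun j => P.x j * P.p j
  x := fun i => 1 / P.x i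

/-- The transformation `s₂`. -/
def s2 (P : GPt m) : GPt m where
  e := fun j => P.e (Equiv.swap 1 2 j)
  q := fun j => P.q j / P.Q2
  p := fun j => (P.p j - P.Q1) * P.Q2
  x := fun i => P.x i / (P.x i - 1)

/-- The transformation `s₃`. -/
def s3 (P : GPt m) : GPt m where
  e := fun j => P.e (Equiv.swap 2 3 j)
  q := fun j => if j = 0 then 1 / P.q 0 else -P.q j / P.q 0
  p := fun j => if j = 0 then -(P.q 0 * P.Q1) else -(P.q 0 * P.p j)
  x := fun i => if i = 0 then 1 / P.x 0 else P.x i / P.x 0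

/-- The transformation `s_k` for `4 ≤ k ≤ n+2`: `ε_k ↔ ε_{k+1}` together with
`(q_{k-3}, p_{k-3}, x_{k-3}) ↔ (q_{k-2}, p_{k-2}, x_{k-2})` (paper numbering). -/
def sMid (k : ℕ) (h : 4 ≤ k ∧ k ≤ m + 4) (P : GPt m) : GPt m where
  e := fun j => P.e (Equiv.swap ⟨k - 1, by omega⟩ ⟨k, by omega⟩ j)
  q := fun j => P.q (Equiv.swap ⟨k - 4, by omega⟩ ⟨k - 3, by omega⟩ j)
  p := fun j => P.p (Equiv.swap ⟨k - 4, by omega⟩ ⟨k - 3, by omega⟩ j)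
  x := fun j => P.x (Equiv.swap ⟨k - 4, by omega⟩ ⟨k - 3, by omega⟩ j)

/-- The transformation `s_{n+3}`: `ε_{n+3} ↦ −ε_{n+3}`, `p_n ↦ p_n − ε_{n+3}/q_n`. -/
def sLast (P : GPt m) : GPt m where
  e := Function.update P.e ⟨m + 4, by omega⟩ (-(P.e ⟨m + 4, by omega⟩))
  q := P.q
  p := Function.update P.p (Fin.last (m + 1))
    (P.p (Fin.last (m + 1)) - P.e ⟨m + 4, by omega⟩ / P.q (Fin.last (m + 1)))
  x := P.x

/-- The family `s_k`, `k = 0, 1, …, n+3` (junk value `id` for `k > n+3`). -/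
def s (k : ℕ) (P : GPt m) : GPt m :=
  if k = 0 then P.s0
  else if k = 1 then P.s1
  else if k = 2 then P.s2
  else if k = 3 then P.s3
  else if h : 4 ≤ k ∧ k ≤ m + 4 then sMid k h P
  else if k = m + 5 then P.sLast
  else P

/-- The nonvanishing, at a given point, of all denominators occurring in `s_k`. -/
def Dfd (k : ℕ) (P : GPt m) : Prop :=
  if k = 0 then
    (∀ j, P.p j ≠ 0) ∧ P.Q1 ≠ 0 ∧ P.Q1 + P.e 2 ≠ 0 ∧ (∀ i, P.x i ≠ 0)
  else if k = 1 then ∀ i, P.x i ≠ 0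
  else if k = 2 then P.Q2 ≠ 0 ∧ ∀ i, P.x i ≠ 1
  else if k = 3 then P.q 0 ≠ 0 ∧ P.x 0 ≠ 0
  else if k = m + 5 then P.q (Fin.last (m + 1)) ≠ 0
  else True

/-- Apply `s_{k₁}, s_{k₂}, …` in succession. -/
def chain : List ℕ → GPt m → GPt m
  | [], P => P
  | k :: ks, P => chain ks (s k P)

/-- All denominators occurring in the successive application of
`s_{k₁}, s_{k₂}, …` are nonzero. -/
def chainDfd : List ℕ → GPt m → Prop
  | [], _ => True
  | k :: ks, P => Dfd k P ∧ chainDfd ks (s k P)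

end GPt

open GPt

section Aux

variable {m : ℕ}

lemma GPt.ext' {P Q : GPt m} (he : P.e = Q.e) (hq : P.q = Q.q)
    (hp : P.p = Q.p) (hx : P.x = Q.x) : P = Q := by
  cases P; cases Q; simp_all

lemma eIdx_ne_zero (j : Fin (m + 2)) : eIdx j ≠ 0 := by
  simp [eIdx, Fin.ext_iff, -Fin.val_eq_zero_iff]

lemma eIdx_ne_one (j : Fin (m + 2)) : eIdx j ≠ 1 := by
  simp [eIdx, Fin.ext_iff]

lemma fin_two_ne_zero : (2 : Fin (m + 5)) ≠ 0 := by
  simp [Fin.ext_iff, Nat.mod_eq_of_lt]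

lemma fin_two_ne_one : (2 : Fin (m + 5)) ≠ 1 := by
  simp [Fin.ext_iff, Nat.mod_eq_of_lt]

lemma s0_e_zero (P : GPt m) : P.s0.e 0 = 1 - P.e 1 := by simp [s0]

lemma s0_e_one (P : GPt m) : P.s0.e 1 = 1 - P.e 0 := by
  simp [s0, Fin.ext_iff, -Fin.val_eq_zero_iff]

lemma s0_e_two (P : GPt m) : P.s0.e 2 = P.e 2 := by
  simp only [s0]
  rw [if_neg fin_two_ne_zero, if_neg fin_two_ne_one]

lemma s0_e_eIdx (P : GPt m) (j : Fin (m + 2)) : P.s0.e (eIdx j) = P.e (eIdx j) := by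
  simp [s0, eIdx_ne_zero, eIdx_ne_one]

lemma qp_s0 (P : GPt m) (j : Fin (m + 2)) (hp : P.p j ≠ 0)
    (hQ1 : P.Q1 ≠ 0) (hQ1e : P.Q1 + P.e 2 ≠ 0) :
    P.s0.q j * P.s0.p j = P.e (eIdx j) - P.q j * P.p j := by
  simp only [s0]
  field_simp
  ring

lemma sum_e_split (e : Fin (m + 5) → ℂ) :
    ∑ j, e j = e 0 + e 1 + e 2 + ∑ j : Fin (m + 2), e (eIdx j) := by
  rw [Fin.sum_univ_succ e, Fin.sum_univ_succ, Fin.sum_univ_succ]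
  have h1 : ((0 : Fin (m + 4)).succ : Fin (m + 5)) = 1 := rfl
  have h2 : ((0 : Fin (m + 3)).succ.succ : Fin (m + 5)) = 2 := by
    simp [Fin.ext_iff, Nat.mod_eq_of_lt]
  have h3 : ∀ j : Fin (m + 2), (j.succ.succ.succ : Fin (m + 5)) = eIdx j := by
    intro j; simp [eIdx, Fin.ext_iff]
  rw [h1, h2, Finset.sum_congr rfl (fun j _ => by rw [h3 j])]
  ring

lemma Q1_s0 (P : GPt m) (hp : ∀ j, P.p j ≠ 0)
    (hQ1 : P.Q1 ≠ 0) (hQ1e : P.Q1 + P.e 2 ≠ 0) :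
    P.s0.Q1 = -(P.Q1 + P.e 2) := by
  have key : P.s0.Q1 = P.Q1 + (∑ j : Fin (m + 2), (P.e (eIdx j) - P.q j * P.p j))
      - (∑ j : Fin (m + 2), P.q j * P.p j)
      - ((2 - P.e 0 - P.e 1 + P.e 2 + ∑ j : Fin (m + 2), P.e (eIdx j))
        - (P.e 0 + P.e 1 + P.e 2 + ∑ j : Fin (m + 2), P.e (eIdx j))) / 2 := by
    unfold Q1
    rw [Finset.sum_congr rfl (fun j _ => qp_s0 P j (hp j) hQ1 hQ1e),
      sum_e_split P.s0.e, sum_e_split P.e, s0_e_zero, s0_e_one, s0_e_two,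
      Finset.sum_congr rfl (fun j _ => s0_e_eIdx P j)]
    ring
  rw [key, Finset.sum_sub_distrib]
  have : P.e 2 = P.Q1 + P.e 2 - P.Q1 := by ring
  unfold Q1
  rw [sum_e_split P.e]
  ring

end Aux

/-- `s₀` is an involution: if `p_j ≠ 0` and `q_j p_j ≠ ε_{j+3}` for all `j`,
`Q₁ ≠ 0`, `Q₁ + ε₃ ≠ 0`, and `x_i ≠ 0` for all `i`, then applying `s₀` twice
returns the original point. -/
theorem s0_involution (m : ℕ) (P : GPt m)
    (hp : ∀ j, P.p j ≠ 0)
    (hqp : ∀ j, P.q j * P.p j ≠ P.e (eIdx j))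
    (hQ1 : P.Q1 ≠ 0)
    (hQ1e : P.Q1 + P.e 2 ≠ 0)
    (hx : ∀ i, P.x i ≠ 0) :
    P.s0.s0 = P := by
  have hQ : P.s0.Q1 = -(P.Q1 + P.e 2) := Q1_s0 P hp hQ1 hQ1e
  have h2 : P.s0.e 2 = P.e 2 := s0_e_two P
  have hD' : P.s0.Q1 * (P.s0.Q1 + P.s0.e 2) = P.Q1 * (P.Q1 + P.e 2) := by
    rw [hQ, h2]; ring
  refine GPt.ext' ?_ ?_ ?_ ?_
  · funext j
    by_cases hj0 : j = 0
    · subst hj0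
      show P.s0.s0.e 0 = P.e 0
      rw [s0_e_zero, s0_e_one]; ring
    by_cases hj1 : j = 1
    · subst hj1
      show P.s0.s0.e 1 = P.e 1
      rw [s0_e_one, s0_e_zero]; ring
    · show P.s0.s0.e j = P.e j
      simp only [s0, if_neg hj0, if_neg hj1]
  · funext j
    show P.s0.p j * (P.s0.q j * P.s0.p j - P.s0.e (eIdx j))
        / (P.s0.Q1 * (P.s0.Q1 + P.s0.e 2)) = P.q j
    rw [hD', s0_e_eIdx, qp_s0 P j (hp j) hQ1 hQ1e]
    simp only [s0]
    have hD := mul_ne_zero hQ1 hQ1e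
    rw [sub_sub_cancel_left, div_mul_eq_mul_div, div_div, neg_mul_neg,
      div_eq_iff (mul_ne_zero (hp j) hD)]
    ring
  · funext j
    show -(P.s0.Q1 * (P.s0.Q1 + P.s0.e 2)) / P.s0.p j = P.p j
    rw [hD']
    simp only [s0]
    have hD := mul_ne_zero hQ1 hQ1e
    rw [div_div_eq_mul_div, mul_comm, mul_div_assoc,
      div_self (neg_ne_zero.mpr hD), mul_one]
  · funext i
    show 1 / (1 / P.x i) = P.x i
    rw [one_div_one_div]
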